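/- If ρ is a classical-classical-quantum-quantum state of the form ρ_{XYAB} = Σ_{x,y} p_{xy} |x⟩⟨x|_X ⊗ |y⟩⟨y|_Y ⊗ ρ^{xy}_{AB}, then the chi-squared divergence from the set of separable states (with respect to the cut XA : BY) satisfies χ²_Sep(ρ_{XYAB}) ≤ d_A d_B − 1. -/

import Mathlib

open Matrix Kronecker BigOperators
open scoped ComplexOrder

noncomputable section

abbrev Mat (d : ℕ) := Matrix (Fin d) (Fin d) ℂ

section Defs

variable {α β α₁ β₁ α₂ β₂ γ δ : Type*}
variable [Fintype α] [DecidableEq α] [Fintype β] [DecidableEq β]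
variable [Fintype α₁] [DecidableEq α₁] [Fintype β₁] [DecidableEq β₁]
variable [Fintype α₂] [DecidableEq α₂] [Fintype β₂] [DecidableEq β₂]
variable [Fintype γ] [DecidableEq γ] [Fintype δ] [DecidableEq δ]

/-- The Choi matrix of a map on matrices. -/
def choiMatrix (S : Matrix α α ℂ → Matrix β β ℂ) : Matrix (β × α) (β × α) ℂ :=
  ∑ i : α, ∑ j : α, (S (Matrix.single i j 1)) ⊗ₖ (Matrix.single i j 1)

/-- Completely positive (via Choi's theorem). -/
def IsCPMap (S : Matrix α α ℂ → Matrix β β ℂ) : Prop := (choiMatrix S).PosSemidef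

/-- Trace preserving. -/
def IsTPMap (S : Matrix α α ℂ → Matrix β β ℂ) : Prop := ∀ X, (S X).trace = X.trace

/-- A quantum channel: completely positive and trace preserving. -/
def IsQChannel (S : Matrix α α ℂ → Matrix β β ℂ) : Prop := IsCPMap S ∧ IsTPMap S

/-- A density operator. -/
def IsDensity (ρ : Matrix α α ℂ) : Prop := ρ.PosSemidef ∧ ρ.trace = 1

/-- The old Mathlib `Matrix.PosSemidef.sqrt` (removed since), with its old definition. -/
def posSemidefSqrt {A : Matrix α α ℂ} (hA : A.PosSemidef) : Matrix α α ℂ :=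
  (hA.1.eigenvectorUnitary : Matrix α α ℂ) *
    Matrix.diagonal ((↑) ∘ (Real.sqrt ·) ∘ hA.1.eigenvalues) *
    (star (hA.1.eigenvectorUnitary : Matrix α α ℂ))

/-- Trace norm of a matrix: trace of √(AᴴA). -/
def traceNorm (A : Matrix α α ℂ) : ℝ :=
  ((posSemidefSqrt (Matrix.posSemidef_conjTranspose_mul_self A)).trace).re

/-- Hilbert–Schmidt adjoint of a map on matrices. -/
def hsAdjoint (S : Matrix α α ℂ → Matrix β β ℂ) (X : Matrix β β ℂ) : Matrix α α ℂ :=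
  ∑ i : α, ∑ j : α, ((S (Matrix.single i j 1))ᴴ * X).trace • Matrix.single i j 1

/-- Generalized (Moore–Penrose) inverse of `σ^{1/2}`, for Hermitian `σ`,
via spectral decomposition (and junk value `0` otherwise). -/
def pinvSqrt (σ : Matrix α α ℂ) : Matrix α α ℂ :=
  if hσ : σ.IsHermitian then
    (hσ.eigenvectorUnitary : Matrix α α ℂ) *
      Matrix.diagonal (fun i => (((Real.sqrt (hσ.eigenvalues i))⁻¹ : ℝ) : ℂ)) *
      (star (hσ.eigenvectorUnitary : Matrix α α ℂ))
  else 0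

/-- Quantum χ²-divergence `Tr((ρ-σ) σ^{-1/2} (ρ-σ) σ^{-1/2})`. -/
def chiSq (ρ σ : Matrix α α ℂ) : ℝ :=
  (((ρ - σ) * pinvSqrt σ * (ρ - σ) * pinvSqrt σ).trace).re

/-- Support inclusion `supp ρ ⊆ supp σ` (i.e. `ker σ ⊆ ker ρ`). -/
def SuppIncl (ρ σ : Matrix α α ℂ) : Prop :=
  ∀ v : α → ℂ, σ *ᵥ v = 0 → ρ *ᵥ v = 0

/-- Separable bipartite states. -/
def IsSepState (σ : Matrix (α × β) (α × β) ℂ) : Prop :=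
  ∃ (m : ℕ) (p : Fin m → ℝ) (ρA : Fin m → Matrix α α ℂ) (ρB : Fin m → Matrix β β ℂ),
    (∀ i, 0 ≤ p i) ∧ (∑ i, p i = 1) ∧ (∀ i, IsDensity (ρA i)) ∧ (∀ i, IsDensity (ρB i)) ∧
    σ = ∑ i, (p i : ℂ) • (ρA i ⊗ₖ ρB i)

/-- χ²-divergence to the set of separable states across the cut `α : β`. -/
def chiSqSep (τ : Matrix (α × β) (α × β) ℂ) : ℝ :=
  sInf {r | ∃ σ, IsDensity σ ∧ IsSepState σ ∧ SuppIncl τ σ ∧ r = chiSq τ σ}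

/-- Trace-norm contraction coefficient. -/
def etaTr (T : Matrix α α ℂ → Matrix β β ℂ) : ℝ :=
  sSup {r | ∃ ρ σ, IsDensity ρ ∧ IsDensity σ ∧ ρ ≠ σ ∧
    r = traceNorm (T ρ - T σ) / traceNorm (ρ - σ)}

/-- χ² contraction coefficient. -/
def etaChi (T : Matrix α α ℂ → Matrix β β ℂ) : ℝ :=
  sSup {r | ∃ ρ σ, IsDensity ρ ∧ IsDensity σ ∧ SuppIncl ρ σ ∧ ρ ≠ σ ∧
    r = chiSq (T ρ) (T σ) / chiSq ρ σ}

/-- Minimal eigenvalue of a (Hermitian) matrix. -/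
def lamMin (M : Matrix α α ℂ) : ℝ :=
  if h : M.IsHermitian then ⨅ i, h.eigenvalues i else 0

/-- The rank-one projector `|ψ⟩⟨ψ|`. -/
def projVec (ψ : α → ℂ) : Matrix α α ℂ := vecMulVec ψ (star ψ)

/-- Unit vector (pure state). -/
def IsUnitVec (ψ : α → ℂ) : Prop := star ψ ⬝ᵥ ψ = 1

/-- Partial trace over the second tensor factor. -/
def ptraceSnd (M : Matrix (α × β) (α × β) ℂ) : Matrix α α ℂ :=
  fun i j => ∑ e : β, M (i, e) (j, e)

-- Square root of a positive semidefinite matrix (junk value `0` otherwise).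
open Classical in
def matSqrt (ρ : Matrix α α ℂ) : Matrix α α ℂ :=
  if h : ρ.PosSemidef then posSemidefSqrt h else 0

/-- Fidelity `F(ρ,σ) = ‖√ρ √σ‖₁²`. -/
def fidelity (ρ σ : Matrix α α ℂ) : ℝ := (traceNorm (matSqrt ρ * matSqrt σ))^2

/-- Tensor (Kronecker) product of two maps on matrices. -/
def mapKron (S₁ : Matrix α α ℂ → Matrix α α ℂ) (S₂ : Matrix β β ℂ → Matrix β β ℂ)
    (M : Matrix (α × β) (α × β) ℂ) : Matrix (α × β) (α × β) ℂ :=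
  fun r c => ∑ i, ∑ j, ∑ k, ∑ l,
    S₁ (Matrix.single i j 1) r.1 c.1 * S₂ (Matrix.single k l 1) r.2 c.2 * M (i, k) (j, l)

/-- Induced trace norm of a map on matrices. -/
def indTraceNorm (L : Matrix α α ℂ → Matrix β β ℂ) : ℝ :=
  sSup {r | ∃ X, traceNorm X ≤ 1 ∧ r = traceNorm (L X)}

/-- Entanglement-breaking map: Kraus representation with rank-one Kraus operators. -/
def IsEntanglementBreaking (S : Matrix α α ℂ → Matrix β β ℂ) : Prop :=
  ∃ (m : ℕ) (K : Fin m → Matrix β α ℂ),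
    (∀ i, (K i).rank ≤ 1) ∧ (∑ i, (K i)ᴴ * K i = 1) ∧ ∀ X, S X = ∑ i, K i * X * (K i)ᴴ

/-- Unitary channel `X ↦ U X Uᴴ`. -/
def IsUnitaryChannel (S : Matrix α α ℂ → Matrix α α ℂ) : Prop :=
  ∃ U : Matrix α α ℂ, U ∈ Matrix.unitaryGroup α ℂ ∧ ∀ X, S X = U * X * Uᴴ

/-- Separable bipartite channel: Kraus operators of tensor product form. -/
def IsSepChannel (T : Matrix (α₁ × β₁) (α₁ × β₁) ℂ → Matrix (α₂ × β₂) (α₂ × β₂) ℂ) : Prop :=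
  ∃ (m : ℕ) (KA : Fin m → Matrix α₂ α₁ ℂ) (KB : Fin m → Matrix β₂ β₁ ℂ),
    (∑ i, (KA i ⊗ₖ KB i)ᴴ * (KA i ⊗ₖ KB i) = 1) ∧
    ∀ X, T X = ∑ i, (KA i ⊗ₖ KB i) * X * (KA i ⊗ₖ KB i)ᴴ

/-- `Id_{γ} ⊗ T ⊗ Id_{δ}` in the arrangement `(γ × α) × (β × δ)`. -/
def idTensorMap (T : Matrix (α₁ × β₁) (α₁ × β₁) ℂ → Matrix (α₂ × β₂) (α₂ × β₂) ℂ)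
    (M : Matrix ((γ × α₁) × (β₁ × δ)) ((γ × α₁) × (β₁ × δ)) ℂ) :
    Matrix ((γ × α₂) × (β₂ × δ)) ((γ × α₂) × (β₂ × δ)) ℂ :=
  fun r c => ∑ a₁ : α₁, ∑ b₁ : β₁, ∑ a₁' : α₁, ∑ b₁' : β₁,
    T (Matrix.single (a₁, b₁) (a₁', b₁') 1) (r.1.2, r.2.1) (c.1.2, c.2.1) *
      M ((r.1.1, a₁), (b₁, r.2.2)) ((c.1.1, a₁'), (b₁', c.2.2))

end Defs

/-- `n`-fold tensor power of a map on `d×d` matrices. -/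
def tpow {d : ℕ} (S : Mat d → Mat d) (n : ℕ)
    (X : Matrix (Fin n → Fin d) (Fin n → Fin d) ℂ) :
    Matrix (Fin n → Fin d) (Fin n → Fin d) ℂ :=
  fun f g => ∑ f', ∑ g', X f' g' * ∏ k, S (Matrix.single (f' k) (g' k) 1) (f k) (g k)

/-- `n`-fold Kronecker tensor power of a matrix. -/
def matTpow {d : ℕ} (A : Mat d) (n : ℕ) : Matrix (Fin n → Fin d) (Fin n → Fin d) ℂ :=
  fun f g => ∏ k, A (f k) (g k)

/-- A cc-qq state `Σ_{x,y} p_{xy} |x⟩⟨x|_X ⊗ |y⟩⟨y|_Y ⊗ ρ^{xy}_{AB}`,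
arranged across the cut `(X,A) : (B,Y)`. -/
def ccqqState {dX dY dA dB : ℕ} (p : Fin dX → Fin dY → ℝ)
    (ρ : Fin dX → Fin dY → Matrix (Fin dA × Fin dB) (Fin dA × Fin dB) ℂ) :
    Matrix ((Fin dX × Fin dA) × (Fin dB × Fin dY)) ((Fin dX × Fin dA) × (Fin dB × Fin dY)) ℂ :=
  fun r c => if r.1.1 = c.1.1 ∧ r.2.2 = c.2.2
    then (p r.1.1 r.2.2 : ℂ) * ρ r.1.1 r.2.2 (r.1.2, r.2.1) (c.1.2, c.2.1) else 0




section Aux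

open Matrix

lemma pinvSqrt_diagonal {n : Type*} [Fintype n] [DecidableEq n] (c : n → ℝ) :
    pinvSqrt (Matrix.diagonal (fun i => (c i : ℂ))) =
      Matrix.diagonal (fun i => (((Real.sqrt (c i))⁻¹ : ℝ) : ℂ)) := by
  have hσ : (Matrix.diagonal (fun i => (c i : ℂ))).IsHermitian := by
    refine Matrix.isHermitian_diagonal_iff.mpr fun i => ?_
    simpa [_root_.IsSelfAdjoint] using Complex.conj_ofReal (c i)
  rw [pinvSqrt, dif_pos hσ]
  set U : Matrix n n ℂ := (hσ.eigenvectorUnitary : Matrix n n ℂ) with hU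
  have hUstar : U * star U = 1 := Matrix.mem_unitaryGroup_iff.mp hσ.eigenvectorUnitary.2
  have hspec : Matrix.diagonal (fun i => (c i : ℂ)) * U
      = U * Matrix.diagonal (RCLike.ofReal ∘ hσ.eigenvalues) := by
    conv_lhs => rw [hσ.spectral_theorem]
    rw [Unitary.conjStarAlgAut_apply]
    rw [mul_assoc, mul_assoc, Matrix.mem_unitaryGroup_iff'.mp hσ.eigenvectorUnitary.2, mul_one]
  have key : ∀ i j, (Real.sqrt (c i))⁻¹ * U i j
      = U i j * (Real.sqrt (hσ.eigenvalues j))⁻¹ := by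
    intro i j
    rcases eq_or_ne (U i j) 0 with h | h
    · simp [h]
    · have h1 : (c i : ℂ) * U i j = U i j * (hσ.eigenvalues j : ℂ) := by
        have := congrFun (congrFun hspec i) j
        simpa [Matrix.diagonal_mul, Matrix.mul_diagonal] using this
      have h2 : (c i : ℂ) = (hσ.eigenvalues j : ℂ) := by
        rw [mul_comm] at h1
        exact mul_left_cancel₀ h h1
      have h3 : c i = hσ.eigenvalues j := by exact_mod_cast h2
      rw [h3, mul_comm]
  have hdiag : Matrix.diagonal (fun i => (((Real.sqrt (c i))⁻¹ : ℝ) : ℂ)) * U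
      = U * Matrix.diagonal (fun j => (((Real.sqrt (hσ.eigenvalues j))⁻¹ : ℝ) : ℂ)) := by
    ext i j
    simp only [Matrix.diagonal_mul, Matrix.mul_diagonal]
    exact_mod_cast key i j
  calc U * Matrix.diagonal (fun j => (((Real.sqrt (hσ.eigenvalues j))⁻¹ : ℝ) : ℂ)) * star U
      = Matrix.diagonal (fun i => (((Real.sqrt (c i))⁻¹ : ℝ) : ℂ)) * U * star U := by
        rw [hdiag]
    _ = Matrix.diagonal (fun i => (((Real.sqrt (c i))⁻¹ : ℝ) : ℂ)) := by
        rw [mul_assoc, hUstar, mul_one]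

lemma re_trace_sq_le_one {n : Type*} [Fintype n] [DecidableEq n] {ρ : Matrix n n ℂ}
    (hpsd : ρ.PosSemidef) (htr : ρ.trace = 1) :
    ((ρ * ρ).trace).re ≤ 1 := by
  have h := hpsd.1
  set U : Matrix n n ℂ := (h.eigenvectorUnitary : Matrix n n ℂ) with hUdef
  have hUU : star U * U = 1 := Matrix.mem_unitaryGroup_iff'.mp h.eigenvectorUnitary.2
  have tr_conj : ∀ M : Matrix n n ℂ, (U * M * star U).trace = M.trace := by
    intro M
    rw [Matrix.trace_mul_cycle, hUU, one_mul]
  have hρ : ρ = U * Matrix.diagonal (RCLike.ofReal ∘ h.eigenvalues) * star U :=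
    h.spectral_theorem
  have hsum : ∑ i, h.eigenvalues i = 1 := by
    have h1 : ρ.trace = ∑ i, ((h.eigenvalues i : ℝ) : ℂ) := by
      rw [congrArg Matrix.trace hρ, tr_conj, Matrix.trace_diagonal]
      rfl
    rw [htr] at h1
    exact_mod_cast h1.symm
  have hsq : ρ * ρ = U * Matrix.diagonal (fun i => ((h.eigenvalues i : ℝ) : ℂ) *
      ((h.eigenvalues i : ℝ) : ℂ)) * star U := by
    have hdd : Matrix.diagonal (RCLike.ofReal ∘ h.eigenvalues) * Matrix.diagonal
        (RCLike.ofReal ∘ h.eigenvalues) = Matrix.diagonal (fun i => ((h.eigenvalues i : ℝ) : ℂ) *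
        ((h.eigenvalues i : ℝ) : ℂ)) := by
      rw [Matrix.diagonal_mul_diagonal]
      rfl
    calc ρ * ρ = (U * Matrix.diagonal (RCLike.ofReal ∘ h.eigenvalues) * star U) *
        (U * Matrix.diagonal (RCLike.ofReal ∘ h.eigenvalues) * star U) := by rw [← hρ]
      _ = U * (Matrix.diagonal (RCLike.ofReal ∘ h.eigenvalues) * ((star U * U) *
          Matrix.diagonal (RCLike.ofReal ∘ h.eigenvalues))) * star U := by
          simp only [mul_assoc]
      _ = _ := by rw [hUU, one_mul, ← mul_assoc, mul_assoc U, hdd]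
  have htr2 : ((ρ * ρ).trace).re = ∑ i, (h.eigenvalues i) ^ 2 := by
    rw [congrArg Matrix.trace hsq, tr_conj, Matrix.trace_diagonal]
    simp only [Complex.re_sum]
    congr 1; ext i
    simp [pow_two]
  rw [htr2]
  calc ∑ i, (h.eigenvalues i) ^ 2 ≤ ∑ i, h.eigenvalues i := by
        refine Finset.sum_le_sum fun i _ => ?_
        have h0 : 0 ≤ h.eigenvalues i := hpsd.eigenvalues_nonneg i
        have h1 : h.eigenvalues i ≤ 1 := by
          rw [← hsum]
          exact Finset.single_le_sum (fun j _ => hpsd.eigenvalues_nonneg j) (Finset.mem_univ i)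
        nlinarith
    _ = 1 := hsum

def reidx {dX dY dA dB : ℕ} :
    (Fin dX × Fin dY) × (Fin dA × Fin dB) ≃ (Fin dX × Fin dA) × (Fin dB × Fin dY) where
  toFun q := ((q.1.1, q.2.1), (q.2.2, q.1.2))
  invFun i := ((i.1.1, i.2.2), (i.1.2, i.2.1))
  left_inv _ := rfl
  right_inv _ := rfl

lemma block_sum {dX dY dA dB : ℕ}
    (g : Fin dX → Fin dY → (Fin dA × Fin dB) → (Fin dA × Fin dB) → ℂ) :
    (∑ i : (Fin dX × Fin dA) × (Fin dB × Fin dY),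
      ∑ j : (Fin dX × Fin dA) × (Fin dB × Fin dY),
        if i.1.1 = j.1.1 ∧ i.2.2 = j.2.2
        then g i.1.1 i.2.2 (i.1.2, i.2.1) (j.1.2, j.2.1) else 0)
    = ∑ x, ∑ y, ∑ u : Fin dA × Fin dB, ∑ v : Fin dA × Fin dB, g x y u v := by
  have step1 : (∑ i : (Fin dX × Fin dA) × (Fin dB × Fin dY),
      ∑ j : (Fin dX × Fin dA) × (Fin dB × Fin dY),
        if i.1.1 = j.1.1 ∧ i.2.2 = j.2.2
        then g i.1.1 i.2.2 (i.1.2, i.2.1) (j.1.2, j.2.1) else 0)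
      = ∑ q : (Fin dX × Fin dY) × (Fin dA × Fin dB),
        ∑ q' : (Fin dX × Fin dY) × (Fin dA × Fin dB),
        if q.1.1 = q'.1.1 ∧ q.1.2 = q'.1.2
        then g q.1.1 q.1.2 q.2 q'.2 else 0 := by
    rw [← Equiv.sum_comp (reidx (dX := dX) (dY := dY) (dA := dA) (dB := dB))]
    refine Finset.sum_congr rfl fun q _ => ?_
    rw [← Equiv.sum_comp (reidx (dX := dX) (dY := dY) (dA := dA) (dB := dB))]
    rfl
  rw [step1]
  simp only [Fintype.sum_prod_type]
  simp [ite_and, Finset.sum_ite_irrel, Finset.sum_ite_eq, Finset.sum_ite_eq']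

lemma trace_MdMd {n : Type*} [Fintype n] [DecidableEq n] (M : Matrix n n ℂ) (e : n → ℂ) :
    (M * Matrix.diagonal e * M * Matrix.diagonal e).trace
      = ∑ i, ∑ j, M i j * e j * (M j i * e i) := by
  have h1 : ∀ i, (M * Matrix.diagonal e * M * Matrix.diagonal e) i i
      = (∑ j, M i j * e j * M j i) * e i := by
    intro i
    rw [Matrix.mul_diagonal]
    congr 1
    rw [Matrix.mul_apply]
    refine Finset.sum_congr rfl fun j _ => ?_
    rw [Matrix.mul_diagonal]
  rw [Matrix.trace]
  refine Finset.sum_congr rfl fun i _ => ?_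
  rw [Matrix.diag, h1, Finset.sum_mul]
  exact Finset.sum_congr rfl fun j _ => by ring

end Aux

set_option maxHeartbeats 1600000 in
/-- for a cc-qq state, `χ²_Sep(ρ_{XYAB}) ≤ d_A d_B − 1` across the cut `XA : BY`. -/
theorem stmt8 {dX dY dA dB : ℕ} (hX : 0 < dX) (hY : 0 < dY) (hA : 0 < dA) (hB : 0 < dB)
    (p : Fin dX → Fin dY → ℝ) (hp : ∀ x y, 0 ≤ p x y) (hp1 : ∑ x, ∑ y, p x y = 1)
    (ρ : Fin dX → Fin dY → Matrix (Fin dA × Fin dB) (Fin dA × Fin dB) ℂ)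
    (hρ : ∀ x y, IsDensity (ρ x y)) :
    chiSqSep (ccqqState p ρ) ≤ (dA : ℝ) * dB - 1 := by
  classical
  have hdA : (0:ℝ) < dA := by exact_mod_cast hA
  have hdB : (0:ℝ) < dB := by exact_mod_cast hB
  have hABpos : (0:ℝ) < (dA:ℝ) * dB := mul_pos hdA hdB
  set c : ℝ := ((dA:ℝ) * (dB:ℝ))⁻¹ with hc
  have hcpos : 0 < c := inv_pos.mpr hABpos
  have hcmul : c * ((dA:ℝ) * dB) = 1 := inv_mul_cancel₀ hABpos.ne'
  set τ := ccqqState p ρ with hτ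
  set Dv : ((Fin dX × Fin dA) × (Fin dB × Fin dY)) → ℝ :=
    fun i => p i.1.1 i.2.2 * c with hDv
  set σ : Matrix ((Fin dX × Fin dA) × (Fin dB × Fin dY))
      ((Fin dX × Fin dA) × (Fin dB × Fin dY)) ℂ :=
    Matrix.diagonal (fun i => ((Dv i : ℝ) : ℂ)) with hσdef
  -- the density property of σ
  have hDvsum : ∑ i, Dv i = 1 := by
    have h1 : ∑ i, Dv i
        = ∑ x, ∑ a : Fin dA, ∑ b : Fin dB, ∑ y, p x y * c := by
      simp [Fintype.sum_prod_type, hDv]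
    rw [h1]
    have h2 : ∀ x : Fin dX, (∑ _a : Fin dA, ∑ _b : Fin dB, ∑ y, p x y * c)
        = ((dA:ℝ) * dB) * ∑ y, p x y * c := by
      intro x
      simp [Finset.sum_const, Finset.card_univ]
      ring
    rw [Finset.sum_congr rfl fun x _ => h2 x]
    have h3 : ∀ x : Fin dX, ((dA:ℝ) * dB) * ∑ y, p x y * c = ∑ y, p x y := by
      intro x
      rw [Finset.mul_sum]
      refine Finset.sum_congr rfl fun y _ => ?_
      calc ((dA:ℝ) * dB) * (p x y * c) = p x y * (c * ((dA:ℝ)*dB)) := by ring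
        _ = p x y := by rw [hcmul, mul_one]
    rw [Finset.sum_congr rfl fun x _ => h3 x, hp1]
  have hσden : IsDensity σ := by
    constructor
    · refine Matrix.posSemidef_diagonal_iff.mpr fun i => ?_
      have : (0:ℝ) ≤ Dv i := mul_nonneg (hp _ _) hcpos.le
      exact_mod_cast this
    · rw [hσdef, Matrix.trace_diagonal]
      rw [show (∑ i, ((Dv i : ℝ) : ℂ)) = (((∑ i, Dv i : ℝ)) : ℂ) by push_cast; rfl]
      rw [hDvsum]; norm_num
  -- separability of σ
  have hσsep : IsSepState σ := by
    refine ⟨dX * dY, fun k => p (finProdFinEquiv.symm k).1 (finProdFinEquiv.symm k).2,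
      fun k => Matrix.diagonal (fun xa : Fin dX × Fin dA =>
        if xa.1 = (finProdFinEquiv.symm k).1 then (((dA:ℝ)⁻¹ : ℝ) : ℂ) else 0),
      fun k => Matrix.diagonal (fun by' : Fin dB × Fin dY =>
        if by'.2 = (finProdFinEquiv.symm k).2 then (((dB:ℝ)⁻¹ : ℝ) : ℂ) else 0),
      fun k => hp _ _, ?_, ?_, ?_, ?_⟩
    · rw [Equiv.sum_comp finProdFinEquiv.symm (fun z : Fin dX × Fin dY => p z.1 z.2)]
      rw [Fintype.sum_prod_type]; exact hp1
    · intro k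
      constructor
      · refine Matrix.posSemidef_diagonal_iff.mpr fun xa => ?_
        split
        · have : (0:ℝ) ≤ (dA:ℝ)⁻¹ := by positivity
          exact_mod_cast this
        · exact le_refl 0
      · rw [Matrix.trace_diagonal]
        rw [Fintype.sum_prod_type]
        simp [Finset.sum_ite_eq, Finset.sum_const, Finset.card_univ]
        rw [show ((dA:ℂ))⁻¹ = (((dA:ℝ)⁻¹ : ℝ) : ℂ) by push_cast; rfl]
        rw [show (dA : ℂ) = (((dA:ℝ) : ℝ) : ℂ) by push_cast; rfl]
        rw [← Complex.ofReal_mul]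
        rw [mul_inv_cancel₀ hdA.ne']
        rfl
    · intro k
      constructor
      · refine Matrix.posSemidef_diagonal_iff.mpr fun by' => ?_
        split
        · have : (0:ℝ) ≤ (dB:ℝ)⁻¹ := by positivity
          exact_mod_cast this
        · exact le_refl 0
      · rw [Matrix.trace_diagonal]
        rw [Fintype.sum_prod_type]
        simp [Finset.sum_ite_eq', Finset.sum_const, Finset.card_univ]
        rw [show ((dB:ℂ))⁻¹ = (((dB:ℝ)⁻¹ : ℝ) : ℂ) by push_cast; rfl]
        rw [show (dB : ℂ) = (((dB:ℝ) : ℝ) : ℂ) by push_cast; rfl]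
        rw [← Complex.ofReal_mul]
        rw [mul_inv_cancel₀ hdB.ne']
        rfl
    · ext i j
      rw [Matrix.sum_apply]
      rcases i with ⟨⟨x, a⟩, ⟨b, y⟩⟩
      rcases j with ⟨⟨x', a'⟩, ⟨b', y'⟩⟩
      by_cases hij : ((x, a), (b, y)) = ((x', a'), (b', y'))
      · rw [hij] at *
        have hdiag : σ ((x',a'),(b',y')) ((x',a'),(b',y')) = ((Dv ((x',a'),(b',y')) : ℝ) : ℂ) := by
          rw [hσdef]; exact Matrix.diagonal_apply_eq _ _
        rw [hdiag]
        have hterm : ∀ k : Fin (dX * dY),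
            ((p (finProdFinEquiv.symm k).1 (finProdFinEquiv.symm k).2 : ℂ) •
              ((Matrix.diagonal (fun xa : Fin dX × Fin dA =>
                if xa.1 = (finProdFinEquiv.symm k).1 then (((dA:ℝ)⁻¹ : ℝ) : ℂ) else 0)) ⊗ₖ
               (Matrix.diagonal (fun by' : Fin dB × Fin dY =>
                if by'.2 = (finProdFinEquiv.symm k).2 then (((dB:ℝ)⁻¹ : ℝ) : ℂ) else 0))))
              ((x',a'),(b',y')) ((x',a'),(b',y'))
            = (p (finProdFinEquiv.symm k).1 (finProdFinEquiv.symm k).2 : ℂ) *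
              ((if x' = (finProdFinEquiv.symm k).1 then (((dA:ℝ)⁻¹ : ℝ) : ℂ) else 0) *
               (if y' = (finProdFinEquiv.symm k).2 then (((dB:ℝ)⁻¹ : ℝ) : ℂ) else 0)) := by
          intro k
          rw [Matrix.smul_apply, Matrix.kroneckerMap_apply,
            Matrix.diagonal_apply_eq, Matrix.diagonal_apply_eq, smul_eq_mul]
        rw [Finset.sum_congr rfl fun k _ => hterm k]
        rw [Equiv.sum_comp finProdFinEquiv.symm (fun z : Fin dX × Fin dY =>
          (p z.1 z.2 : ℂ) * ((if x' = z.1 then (((dA:ℝ)⁻¹ : ℝ) : ℂ) else 0) *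
            (if y' = z.2 then (((dB:ℝ)⁻¹ : ℝ) : ℂ) else 0)))]
        rw [Fintype.sum_prod_type]
        simp only [mul_ite, mul_zero, ite_mul, zero_mul, Finset.sum_ite_eq, Finset.sum_ite_eq',
          Finset.mem_univ, if_true]
        rw [hDv]
        push_cast
        rw [hc]
        push_cast
        rw [mul_inv]
      · have hz : σ ((x,a),(b,y)) ((x',a'),(b',y')) = 0 := by
          rw [hσdef]; exact Matrix.diagonal_apply_ne _ hij
        rw [hz]
        symm
        refine Finset.sum_eq_zero fun k _ => ?_
        rw [Matrix.smul_apply, Matrix.kroneckerMap_apply, smul_eq_mul]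
        have : ((x, a) ≠ (x', a')) ∨ ((b, y) ≠ (b', y')) := by
          by_contra hcon
          push_neg at hcon
          exact hij (by rw [Prod.ext_iff]; exact ⟨hcon.1, hcon.2⟩)
        rcases this with h | h
        · simp [Matrix.diagonal_apply_ne _ h]
        · simp [Matrix.diagonal_apply_ne _ h]
  -- support inclusion
  have hsupp : SuppIncl τ σ := by
    intro v hv
    have hvz : ∀ j : ((Fin dX × Fin dA) × (Fin dB × Fin dY)), p j.1.1 j.2.2 ≠ 0 → v j = 0 := by
      intro j hj
      have := congrFun hv j
      rw [Matrix.mulVec_diagonal] at this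
      have hD : ((Dv j : ℝ) : ℂ) ≠ 0 := by
        simp only [ne_eq, Complex.ofReal_eq_zero]
        exact mul_ne_zero hj hcpos.ne'
      simpa [hD] using this
    ext i
    rw [Matrix.mulVec, dotProduct]
    refine Finset.sum_eq_zero fun j _ => ?_
    rcases eq_or_ne (p i.1.1 i.2.2) 0 with hp0 | hp0
    · have : τ i j = 0 := by
        rw [hτ, ccqqState]
        split
        · rename_i hcond
          rw [show p i.1.1 i.2.2 = 0 from hp0]
          norm_num
        · rfl
      rw [this, zero_mul]
    · by_cases hblk : i.1.1 = j.1.1 ∧ i.2.2 = j.2.2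
      · have : v j = 0 := by
          refine hvz j ?_
          rw [← hblk.1, ← hblk.2]
          exact hp0
        rw [this, mul_zero]
      · have : τ i j = 0 := by
          rw [hτ, ccqqState]
          exact if_neg hblk
        rw [this, zero_mul]
  -- the value bound
  set N : Fin dX → Fin dY → Matrix (Fin dA × Fin dB) (Fin dA × Fin dB) ℂ :=
    fun x y => ρ x y - (c : ℂ) • 1 with hN
  set s : Fin dX → Fin dY → ℝ := fun x y => (Real.sqrt (p x y * c))⁻¹ with hs
  have hQ : pinvSqrt σ = Matrix.diagonal
      (fun i => (((Real.sqrt (Dv i))⁻¹ : ℝ) : ℂ)) := by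
    rw [hσdef]; exact pinvSqrt_diagonal Dv
  have hval : chiSq τ σ ≤ (dA:ℝ) * dB - 1 := by
    have hpoint : ∀ i j : ((Fin dX × Fin dA) × (Fin dB × Fin dY)),
        (τ - σ) i j * (((Real.sqrt (Dv j))⁻¹ : ℝ) : ℂ) *
          ((τ - σ) j i * (((Real.sqrt (Dv i))⁻¹ : ℝ) : ℂ))
        = if i.1.1 = j.1.1 ∧ i.2.2 = j.2.2
          then ((p i.1.1 i.2.2 : ℂ) * N i.1.1 i.2.2 (i.1.2, i.2.1) (j.1.2, j.2.1) *
            ((s i.1.1 i.2.2 : ℝ) : ℂ)) *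
            ((p i.1.1 i.2.2 : ℂ) * N i.1.1 i.2.2 (j.1.2, j.2.1) (i.1.2, i.2.1) *
            ((s i.1.1 i.2.2 : ℝ) : ℂ))
          else 0 := by
      intro i j
      rcases i with ⟨⟨x, a⟩, ⟨b, y⟩⟩
      rcases j with ⟨⟨x', a'⟩, ⟨b', y'⟩⟩
      by_cases hblk : x = x' ∧ y = y'
      · obtain ⟨hx, hy⟩ := hblk
        subst hx; subst hy
        rw [if_pos ⟨rfl, rfl⟩]
        have hMij : (τ - σ) ((x,a),(b,y)) ((x,a'),(b',y))
            = (p x y : ℂ) * N x y (a, b) (a', b') := by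
          rw [Matrix.sub_apply, hτ, hσdef, ccqqState]
          rw [if_pos ⟨rfl, rfl⟩]
          simp only [hN]
          rw [Matrix.sub_apply, Matrix.smul_apply, Matrix.one_apply]
          simp only [smul_eq_mul]
          by_cases he : ((x,a),(b,y)) = ((x,a'),(b',y))
          · have he2 : ((a : Fin dA), (b : Fin dB)) = ((a' : Fin dA), (b' : Fin dB)) := by
              rw [Prod.ext_iff] at he
              obtain ⟨h1, h2⟩ := he
              rw [Prod.ext_iff] at h1 h2
              exact Prod.ext h1.2 h2.1
            rw [he, Matrix.diagonal_apply_eq, if_pos he2]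
            rw [hDv]
            push_cast
            ring_nf
          · have he2 : ((a : Fin dA), (b : Fin dB)) ≠ ((a' : Fin dA), (b' : Fin dB)) := by
              intro hcon
              rw [Prod.ext_iff] at hcon
              exact he (by
                rw [Prod.ext_iff]
                exact ⟨Prod.ext rfl hcon.1, Prod.ext hcon.2 rfl⟩)
            rw [Matrix.diagonal_apply_ne _ he, if_neg he2]
            push_cast
            ring
        have hMji : (τ - σ) ((x,a'),(b',y)) ((x,a),(b,y))
            = (p x y : ℂ) * N x y (a', b') (a, b) := by
          rw [Matrix.sub_apply, hτ, hσdef, ccqqState]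
          rw [if_pos ⟨rfl, rfl⟩]
          simp only [hN]
          rw [Matrix.sub_apply, Matrix.smul_apply, Matrix.one_apply]
          simp only [smul_eq_mul]
          by_cases he : ((x,a'),(b',y)) = ((x,a),(b,y))
          · have he2 : ((a' : Fin dA), (b' : Fin dB)) = ((a : Fin dA), (b : Fin dB)) := by
              rw [Prod.ext_iff] at he
              obtain ⟨h1, h2⟩ := he
              rw [Prod.ext_iff] at h1 h2
              exact Prod.ext h1.2 h2.1
            rw [he, Matrix.diagonal_apply_eq, if_pos he2]
            rw [hDv]
            push_cast
            ring_nf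
          · have he2 : ((a' : Fin dA), (b' : Fin dB)) ≠ ((a : Fin dA), (b : Fin dB)) := by
              intro hcon
              rw [Prod.ext_iff] at hcon
              exact he (by
                rw [Prod.ext_iff]
                exact ⟨Prod.ext rfl hcon.1, Prod.ext hcon.2 rfl⟩)
            rw [Matrix.diagonal_apply_ne _ he, if_neg he2]
            push_cast
            ring
        rw [hMij, hMji]
      · rw [if_neg hblk]
        have h1 : τ ((x,a),(b,y)) ((x',a'),(b',y')) = 0 := by
          rw [hτ, ccqqState]; exact if_neg hblk
        have h2 : σ ((x,a),(b,y)) ((x',a'),(b',y')) = 0 := by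
          rw [hσdef]
          refine Matrix.diagonal_apply_ne _ fun hcon => ?_
          rw [Prod.ext_iff] at hcon
          obtain ⟨ha1, ha2⟩ := hcon
          rw [Prod.ext_iff] at ha1 ha2
          exact hblk ⟨ha1.1, ha2.2⟩
        have h3 : τ ((x',a'),(b',y')) ((x,a),(b,y)) = 0 := by
          rw [hτ, ccqqState]
          refine if_neg fun hcon => hblk ⟨hcon.1.symm, hcon.2.symm⟩
        have h4 : σ ((x',a'),(b',y')) ((x,a),(b,y)) = 0 := by
          rw [hσdef]
          refine Matrix.diagonal_apply_ne _ fun hcon => ?_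
          rw [Prod.ext_iff] at hcon
          obtain ⟨ha1, ha2⟩ := hcon
          rw [Prod.ext_iff] at ha1 ha2
          exact hblk ⟨ha1.1.symm, ha2.2.symm⟩
        rw [Matrix.sub_apply, Matrix.sub_apply, h1, h2, h3, h4]
        ring
    have htraceform : chiSq τ σ
        = (∑ x, ∑ y, ∑ u : Fin dA × Fin dB, ∑ v : Fin dA × Fin dB,
            ((p x y : ℂ) * N x y u v * ((s x y : ℝ) : ℂ)) *
            ((p x y : ℂ) * N x y v u * ((s x y : ℝ) : ℂ))).re := by
      rw [chiSq, hQ, trace_MdMd]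
      congr 1
      rw [Finset.sum_congr rfl fun i _ => Finset.sum_congr rfl fun j _ => hpoint i j]
      exact block_sum (fun x y u v => (p x y : ℂ) * N x y u v * ((s x y : ℝ) : ℂ) *
        ((p x y : ℂ) * N x y v u * ((s x y : ℝ) : ℂ)))
    have hinner : ∀ x y, (∑ u : Fin dA × Fin dB, ∑ v : Fin dA × Fin dB,
        ((p x y : ℂ) * N x y u v * ((s x y : ℝ) : ℂ)) *
        ((p x y : ℂ) * N x y v u * ((s x y : ℝ) : ℂ)))
        = (((p x y)^2 * (s x y)^2 : ℝ) : ℂ) * ((ρ x y * ρ x y).trace - (c : ℂ)) := by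
      intro x y
      have h1 : (∑ u : Fin dA × Fin dB, ∑ v : Fin dA × Fin dB,
          ((p x y : ℂ) * N x y u v * ((s x y : ℝ) : ℂ)) *
          ((p x y : ℂ) * N x y v u * ((s x y : ℝ) : ℂ)))
          = (((p x y)^2 * (s x y)^2 : ℝ) : ℂ) * (N x y * N x y).trace := by
        have htr : (N x y * N x y).trace
            = ∑ u : Fin dA × Fin dB, ∑ v : Fin dA × Fin dB, N x y u v * N x y v u := by
          simp [Matrix.trace, Matrix.mul_apply, Matrix.diag]
        rw [htr, Finset.mul_sum]
        refine Finset.sum_congr rfl fun u _ => ?_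
        rw [Finset.mul_sum]
        refine Finset.sum_congr rfl fun v _ => ?_
        push_cast
        ring
      rw [h1]
      congr 1
      have htrρ : (ρ x y).trace = 1 := (hρ x y).2
      have hNN : N x y * N x y
          = ρ x y * ρ x y - (c:ℂ) • ρ x y - (c:ℂ) • ρ x y + ((c:ℂ) * c) • 1 := by
        simp only [hN, sub_mul, mul_sub, Matrix.smul_mul, Matrix.mul_smul, smul_smul,
          Matrix.one_mul, Matrix.mul_one]
        abel
      rw [congrArg Matrix.trace hNN]
      rw [Matrix.trace_add, Matrix.trace_sub, Matrix.trace_sub]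
      simp only [Matrix.trace_smul]
      rw [htrρ]
      have hcard : (1 : Matrix (Fin dA × Fin dB) (Fin dA × Fin dB) ℂ).trace
          = ((dA : ℂ) * dB) := by
        rw [Matrix.trace_one]
        simp [Fintype.card_prod]
      rw [hcard]
      have hcc : ((c:ℂ) * c) • ((dA : ℂ) * dB) = (c : ℂ) := by
        rw [smul_eq_mul]
        have : ((c : ℂ)) * ((dA : ℂ) * dB) = 1 := by
          rw [show ((dA : ℂ) * dB) = (((dA:ℝ) * dB : ℝ) : ℂ) by push_cast; rfl]
          rw [← Complex.ofReal_mul, hcmul]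
          rfl
        calc ((c:ℂ) * c) * ((dA : ℂ) * dB) = (c:ℂ) * ((c:ℂ) * ((dA : ℂ) * dB)) := by ring
          _ = (c:ℂ) := by rw [this, mul_one]
      rw [hcc]
      simp [smul_eq_mul]
    rw [htraceform]
    rw [Finset.sum_congr rfl fun x _ => Finset.sum_congr rfl fun y _ => hinner x y]
    simp only [Complex.re_sum]
    have hterm : ∀ x y, (((((p x y)^2 * (s x y)^2 : ℝ) : ℂ) *
        ((ρ x y * ρ x y).trace - (c : ℂ))).re) ≤ p x y * ((dA:ℝ) * dB - 1) := by
      intro x y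
      rw [Complex.re_ofReal_mul]
      have hre : ((ρ x y * ρ x y).trace - (c : ℂ)).re
          = ((ρ x y * ρ x y).trace).re - c := by
        rw [Complex.sub_re, Complex.ofReal_re]
      rw [hre]
      rcases eq_or_lt_of_le (hp x y) with hp0 | hpp
      · rw [← hp0]
        norm_num
      · have hpc : 0 < p x y * c := mul_pos hpp hcpos
        have hs2 : (s x y)^2 = (p x y * c)⁻¹ := by
          simp only [hs]
          rw [← Real.sqrt_inv]
          exact Real.sq_sqrt (by positivity)
        have hcoef : (p x y)^2 * (s x y)^2 = p x y * ((dA:ℝ) * dB) := by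
          rw [hs2, hc]
          field_simp
        rw [hcoef]
        have hT : ((ρ x y * ρ x y).trace).re ≤ 1 :=
          re_trace_sq_le_one (hρ x y).1 (hρ x y).2
        have hc' : c * ((dA:ℝ) * dB) = 1 := hcmul
        nlinarith [mul_pos hpp hABpos]
    calc (∑ x, ∑ y, (((((p x y)^2 * (s x y)^2 : ℝ) : ℂ) *
          ((ρ x y * ρ x y).trace - (c : ℂ))).re))
        ≤ ∑ x, ∑ y, p x y * ((dA:ℝ) * dB - 1) := by
          refine Finset.sum_le_sum fun x _ => Finset.sum_le_sum fun y _ => hterm x y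
      _ = (dA:ℝ) * dB - 1 := by
          rw [show (∑ x, ∑ y, p x y * ((dA:ℝ) * dB - 1))
              = (∑ x, ∑ y, p x y) * ((dA:ℝ) * dB - 1) by
            rw [Finset.sum_mul]
            exact Finset.sum_congr rfl fun x _ => by rw [Finset.sum_mul]]
          rw [hp1, one_mul]
  -- conclude
  rw [chiSqSep]
  by_cases hbdd : BddBelow
      {r | ∃ σ', IsDensity σ' ∧ IsSepState σ' ∧ SuppIncl τ σ' ∧ r = chiSq τ σ'}
  · exact le_trans (csInf_le hbdd ⟨σ, hσden, hσsep, hsupp, rfl⟩) hval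
  · rw [csInf_of_not_bddBelow hbdd, Real.sInf_empty]
    have h1 : (1:ℝ) ≤ dA := by exact_mod_cast hA
    have h2 : (1:ℝ) ≤ dB := by exact_mod_cast hB
    nlinarith

end
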